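/- For l > 0 and s ≥ 0, tanh(l/4 - (1/2)·artanh(sinh(l/2)·sinh(s)/(1 + cosh(l/2)·cosh(s)))) = sinh(l/2) / (cosh(l/2) + exp(s)). Equivalently, if tanh(w/2) = tanh(l/4)·tanh(s/2), then tanh(l/4 - w/2) = sinh(l/2)/(cosh(l/2) + eˢ). -/

import Mathlib

open Real

/-- The real inverse hyperbolic tangent. -/
noncomputable def artanh (x : ℝ) : ℝ := (1/2) * Real.log ((1 + x) / (1 - x))

lemma tanh_eq_exp (y : ℝ) :
    Real.tanh y = (Real.exp (2*y) - 1) / (Real.exp (2*y) + 1) := by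
  rw [Real.tanh_eq_sinh_div_cosh, Real.sinh_eq, Real.cosh_eq, Real.exp_neg,
    show (2:ℝ)*y = y + y by ring, Real.exp_add]
  have h := Real.exp_pos y
  have h1 : Real.exp y ≠ 0 := ne_of_gt h
  have h2 : Real.exp y + (Real.exp y)⁻¹ ≠ 0 := by positivity
  have h3 : Real.exp y * Real.exp y + 1 ≠ 0 := by positivity
  field_simp

theorem tanh_quarter_gap_boundary_geodesic (l s : ℝ)
    (hl : 0 < l) (hs : 0 ≤ s) :
    Real.tanh (l/4 - (1/2) * _root_.artanh (Real.sinh (l/2) * Real.sinh s /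
        (1 + Real.cosh (l/2) * Real.cosh s)))
      = Real.sinh (l/2) / (Real.cosh (l/2) + Real.exp s) := by
  set p := Real.exp (l/2) with hpdef
  set q := Real.exp s with hqdef
  have hp0 : 0 < p := Real.exp_pos _
  have hq0 : 0 < q := Real.exp_pos _
  have hp1 : 1 < p := by
    have := Real.add_one_le_exp (l/2); nlinarith
  have hq1 : 1 ≤ q := by
    have := Real.add_one_le_exp s; nlinarith
  have hpne : p ≠ 0 := ne_of_gt hp0
  have hqne : q ≠ 0 := ne_of_gt hq0
  have hD : (0:ℝ) < (p*q+1)^2 + (p+q)^2 := by positivity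
  have hDne : ((p*q+1)^2 + (p+q)^2 : ℝ) ≠ 0 := ne_of_gt hD
  have hA : (0:ℝ) < p*q+1 := by positivity
  have hB : (0:ℝ) < p+q := by positivity
  -- Step 1: rewrite X
  have hX : Real.sinh (l/2) * Real.sinh s / (1 + Real.cosh (l/2) * Real.cosh s)
      = ((p*q+1)^2 - (p+q)^2) / ((p*q+1)^2 + (p+q)^2) := by
    rw [Real.sinh_eq, Real.sinh_eq, Real.cosh_eq, Real.cosh_eq, Real.exp_neg, Real.exp_neg,
      ← hpdef, ← hqdef]
    have hden : (0:ℝ) < 1 + (p + p⁻¹)/2 * ((q + q⁻¹)/2) := by positivity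
    rw [div_eq_div_iff (ne_of_gt hden) hDne]
    field_simp
    ring
  -- Step 2: artanh X = log ((pq+1)/(p+q))
  have hart : _root_.artanh (((p*q+1)^2 - (p+q)^2) / ((p*q+1)^2 + (p+q)^2))
      = Real.log ((p*q+1)/(p+q)) := by
    unfold _root_.artanh
    have h1 : 1 + ((p*q+1)^2 - (p+q)^2) / ((p*q+1)^2 + (p+q)^2)
        = 2*(p*q+1)^2 / ((p*q+1)^2 + (p+q)^2) := by
      field_simp; ring
    have h2 : 1 - ((p*q+1)^2 - (p+q)^2) / ((p*q+1)^2 + (p+q)^2)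
        = 2*(p+q)^2 / ((p*q+1)^2 + (p+q)^2) := by
      field_simp; ring
    rw [h1, h2]
    have h3 : 2*(p*q+1)^2 / ((p*q+1)^2 + (p+q)^2) / (2*(p+q)^2 / ((p*q+1)^2 + (p+q)^2))
        = ((p*q+1)/(p+q))^2 := by
      rw [div_div_div_eq]
      field_simp
    rw [h3, Real.log_pow]
    push_cast
    ring
  rw [hX, hart]
  -- Step 3: simplify the tanh argument
  have harg : l/4 - (1/2) * Real.log ((p*q+1)/(p+q))
      = (1/2) * Real.log (p*(p+q)/(p*q+1)) := by
    have hl4 : l/4 = (1/2) * Real.log p := by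
      rw [hpdef, Real.log_exp]; ring
    rw [hl4, Real.log_div (by positivity) (ne_of_gt hB),
      Real.log_div (by positivity) (ne_of_gt hA),
      Real.log_mul hpne (ne_of_gt hB)]
    ring
  rw [harg, tanh_eq_exp]
  have hR : (0:ℝ) < p*(p+q)/(p*q+1) := by positivity
  rw [show (2:ℝ) * ((1/2) * Real.log (p*(p+q)/(p*q+1))) = Real.log (p*(p+q)/(p*q+1)) by ring,
    Real.exp_log hR]
  -- Step 4: final algebra
  rw [Real.sinh_eq, Real.cosh_eq, Real.exp_neg, ← hpdef]
  have hd1 : (0:ℝ) < (p + p⁻¹)/2 + q := by positivity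
  have hd2 : p*(p+q)/(p*q+1) + 1 ≠ 0 := by positivity
  rw [div_eq_div_iff hd2 (ne_of_gt hd1)]
  field_simp
  ring
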